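/- The annihilator of a regular differentiable codistribution is differentiable: if near a point q₀ the family D_q ⊆ ℝⁿ is spanned by finitely many continuous sections and has constant rank ρ, then there exist an open neighbourhood V of q₀ and continuous maps v₁,…,v_{n−ρ} : V → ℝⁿ such that D_q° = span{v₁(q),…,v_{n−ρ}(q)} for all q ∈ V (and these spanning vectors are pointwise linearly independent). -/

import Mathlib

/-- From a finite family whose span has finrank `ρ`, extract an injective selection of
`ρ` indices on which the family is linearly independent. -/
theorem exists_linearIndependent_subfamily {K V : Type*} [Field K] [AddCommGroup V]
    [Module K V] {ι : Type*} [Fintype ι] (f : ι → V) (ρ : ℕ)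
    (h : Module.finrank K (Submodule.span K (Set.range f)) = ρ) :
    ∃ σ : Fin ρ → ι, Function.Injective σ ∧ LinearIndependent K (fun k => f (σ k)) := by
  obtain ⟨b, hbsub, hbspan, hbind⟩ := exists_linearIndependent K (Set.range f)
  have hbfin : b.Finite := (Set.finite_range f).subset hbsub
  haveI : Fintype b := hbfin.fintype
  have hcard : Fintype.card b = ρ := by
    have := finrank_span_set_eq_card hbind
    rw [hbspan, h] at this
    rw [this, Set.toFinset_card]
  obtain e : Fin ρ ≃ b := (Fintype.equivFinOfCardEq hcard).symm
  have hsel : ∀ k : Fin ρ, ∃ i : ι, f i = (e k : V) := fun k => hbsub (e k).2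
  choose σ hσ using hsel
  have hfσ : (fun k => f (σ k)) = fun k => ((e k : b) : V) := funext fun k => hσ k
  have hind : LinearIndependent K (fun k => f (σ k)) := by
    rw [hfσ]
    exact hbind.comp e e.injective
  refine ⟨σ, ?_, hind⟩
  intro a b hab
  have := hind.injective (R := K)
  have h2 : f (σ a) = f (σ b) := by rw [hab]
  rw [hσ a, hσ b] at h2
  exact e.injective (Subtype.ext h2)

open Matrix

theorem annihilator_of_regular_codistribution_differentiable
    {X : Type*} [TopologicalSpace X] {n : ℕ}
    (D : X → Submodule ℝ (Fin n → ℝ)) (q₀ : X) (ρ : ℕ)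
    (hreg : ∃ (U : Set X) (_ : IsOpen U) (_ : q₀ ∈ U) (l : ℕ)
      (ω : Fin l → X → (Fin n → ℝ)),
        (∀ i, ContinuousOn (ω i) U) ∧
        (∀ q ∈ U, D q = Submodule.span ℝ (Set.range fun i => ω i q)) ∧
        (∀ q ∈ U, Module.finrank ℝ (D q) = ρ)) :
    ∃ (V : Set X) (_ : IsOpen V) (_ : q₀ ∈ V) (v : Fin (n - ρ) → X → (Fin n → ℝ)),
      (∀ j, ContinuousOn (v j) V) ∧
      (∀ q ∈ V, (Submodule.span ℝ (Set.range fun j => v j q) : Set (Fin n → ℝ))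
        = {w : Fin n → ℝ | ∀ α ∈ D q, α ⬝ᵥ w = 0}) ∧
      (∀ q ∈ V, LinearIndependent ℝ (fun j => v j q)) := by
  obtain ⟨U, hUopen, hq₀U, l, ω, hωc, hωspan, hωrank⟩ := hreg
  -- select ρ rows linearly independent at q₀
  obtain ⟨σ, hσinj, hσind⟩ : ∃ σ : Fin ρ → Fin l, Function.Injective σ ∧
      LinearIndependent ℝ (fun k => ω (σ k) q₀) := by
    apply exists_linearIndependent_subfamily (fun i => ω i q₀) ρ
    rw [← hωspan q₀ hq₀U]
    exact hωrank q₀ hq₀U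
  -- the matrix of selected rows
  set A : X → Matrix (Fin ρ) (Fin n) ℝ := fun q => Matrix.of fun k j => ω (σ k) q j with hA
  -- select ρ columns giving an invertible submatrix at q₀
  obtain ⟨τ, hτinj, hτind⟩ : ∃ τ : Fin ρ → Fin n, Function.Injective τ ∧
      LinearIndependent ℝ (fun k' => (A q₀)ᵀ (τ k')) := by
    apply exists_linearIndependent_subfamily (fun j => (A q₀)ᵀ j) ρ
    have h1 : Module.finrank ℝ (Submodule.span ℝ (Set.range (A q₀))) = ρ := by
      have : LinearIndependent ℝ (fun k => A q₀ k) := hσind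
      rw [finrank_span_eq_card this, Fintype.card_fin]
    have h2 := (A q₀).rank_eq_finrank_span_row
    have h3 := (A q₀)ᵀ.rank_eq_finrank_span_row
    rw [(A q₀).rank_transpose] at h3
    exact h3.symm.trans (h2.trans h1)
  set B : X → Matrix (Fin ρ) (Fin ρ) ℝ := fun q => (A q).submatrix id τ with hB
  have hBq₀ : IsUnit (B q₀) := by
    rw [← Matrix.linearIndependent_cols_iff_isUnit]
    exact hτind
  have hdet₀ : (B q₀).det ≠ 0 := by
    have := (Matrix.isUnit_iff_isUnit_det (B q₀)).mp hBq₀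
    exact IsUnit.ne_zero this
  -- the column index set and its complement enumeration
  set T : Finset (Fin n) := Finset.image τ Finset.univ with hT
  have hTcard : T.card = ρ := by
    rw [hT, Finset.card_image_of_injective _ hτinj, Finset.card_univ, Fintype.card_fin]
  have hTc : Tᶜ.card = n - ρ := by
    rw [Finset.card_compl, hTcard, Fintype.card_fin]
  set c : Fin (n - ρ) → Fin n := fun j => ((Tᶜ.orderIsoOfFin hTc) j : Fin n) with hc
  have hcinj : Function.Injective c := fun a b hab =>
    (Tᶜ.orderIsoOfFin hTc).injective (Subtype.ext hab)
  have hcT : ∀ j, c j ∉ T := fun j => Finset.mem_compl.mp ((Tᶜ.orderIsoOfFin hTc) j).2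
  have hcτ : ∀ j, ¬ ∃ k, τ k = c j := by
    intro j ⟨k, hk⟩
    exact hcT j (hT ▸ Finset.mem_image.mpr ⟨k, Finset.mem_univ k, hk⟩)
  have hcsurj : ∀ i : Fin n, i ∉ T → ∃ j, c j = i := by
    intro i hi
    obtain ⟨j, hj⟩ := (Tᶜ.orderIsoOfFin hTc).surjective ⟨i, Finset.mem_compl.mpr hi⟩
    exact ⟨j, congrArg Subtype.val hj⟩
  have hmemT : ∀ i : Fin n, i ∈ T ↔ ∃ k, τ k = i := by
    intro i
    rw [hT, Finset.mem_image]
    simp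
  -- entrywise continuity of ω and of B
  have hωcomp : ∀ (i : Fin l) (j : Fin n), ContinuousOn (fun q => ω i q j) U :=
    fun i j => (continuous_apply j).comp_continuousOn (hωc i)
  have hdetc : ContinuousOn (fun q => (B q).det) U := by
    rw [continuousOn_iff_continuous_restrict]
    apply Continuous.matrix_det
    apply continuous_matrix
    intro k k'
    exact continuousOn_iff_continuous_restrict.mp (hωcomp (σ k) (τ k'))
  -- the neighbourhood V
  refine ⟨U ∩ (fun q => (B q).det) ⁻¹' {0}ᶜ, ?_, ⟨hq₀U, hdet₀⟩, ?_⟩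
  · exact hdetc.isOpen_inter_preimage hUopen isOpen_compl_singleton
  set V : Set X := U ∩ (fun q => (B q).det) ⁻¹' {0}ᶜ with hV
  have hVU : V ⊆ U := Set.inter_subset_left
  have hVdet : ∀ q ∈ V, (B q).det ≠ 0 := fun q hq => hq.2
  have hVunit : ∀ q ∈ V, IsUnit (B q) := fun q hq =>
    (Matrix.isUnit_iff_isUnit_det (B q)).mpr (isUnit_iff_ne_zero.mpr (hVdet q hq))
  -- the sections
  set x : Fin (n - ρ) → X → Fin ρ → ℝ :=
    fun j q => -((B q)⁻¹ *ᵥ fun k => ω (σ k) q (c j)) with hx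
  set v : Fin (n - ρ) → X → Fin n → ℝ :=
    fun j q => Function.extend τ (x j q) (fun i => if i = c j then 1 else 0) with hv
  -- pointwise evaluation of the sections
  have hvτ : ∀ j q k, v j q (τ k) = x j q k := fun j q k => hτinj.extend_apply _ _ k
  have hvnτ : ∀ j q i, (¬ ∃ k, τ k = i) → v j q i = if i = c j then 1 else 0 :=
    fun j q i hi => Function.extend_apply' _ _ _ hi
  have hvc : ∀ j q j₀, v j q (c j₀) = if j₀ = j then 1 else 0 := by
    intro j q j₀
    rw [hvnτ j q (c j₀) (hcτ j₀)]
    by_cases h : j₀ = j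
    · simp [h]
    · rw [if_neg h, if_neg (fun hcc => h (hcinj hcc))]
  -- splitting dot products along T and its complement
  have hsplit : ∀ (q : X) (k : Fin ρ) (w : Fin n → ℝ),
      ω (σ k) q ⬝ᵥ w = (∑ k', B q k k' * w (τ k')) + ∑ i ∈ Tᶜ, ω (σ k) q i * w i := by
    intro q k w
    have h1 : (∑ i ∈ T, ω (σ k) q i * w i) + ∑ i ∈ Tᶜ, ω (σ k) q i * w i
        = ∑ i, ω (σ k) q i * w i := T.sum_add_sum_compl _
    have h2 : ∑ i ∈ T, ω (σ k) q i * w i = ∑ k', ω (σ k) q (τ k') * w (τ k') := by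
      rw [hT, Finset.sum_image (fun a _ b _ hab => hτinj hab)]
    rw [dotProduct, ← h1, h2]
    rfl
  -- each section lies in the kernel of each selected row
  have hdotv : ∀ q ∈ V, ∀ (k : Fin ρ) (j : Fin (n - ρ)), ω (σ k) q ⬝ᵥ v j q = 0 := by
    intro q hq k j
    rw [hsplit q k (v j q)]
    have h1 : (∑ k', B q k k' * v j q (τ k')) = (B q *ᵥ x j q) k := by
      simp only [Matrix.mulVec, dotProduct]
      exact Finset.sum_congr rfl fun k' _ => by rw [hvτ]
    have h2 : B q *ᵥ x j q = -(fun k => ω (σ k) q (c j)) := by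
      rw [hx]
      simp only
      rw [Matrix.mulVec_neg, Matrix.mulVec_mulVec, Matrix.mul_nonsing_inv _
        (isUnit_iff_ne_zero.mpr (hVdet q hq)), Matrix.one_mulVec]
    have h3 : (∑ i ∈ Tᶜ, ω (σ k) q i * v j q i) = ω (σ k) q (c j) := by
      have : ∀ i ∈ Tᶜ, ω (σ k) q i * v j q i
          = if i = c j then ω (σ k) q i else 0 := by
        intro i hi
        rw [hvnτ j q i (fun he => (Finset.mem_compl.mp hi) ((hmemT i).mpr he))]
        by_cases h : i = c j <;> simp [h]
      rw [Finset.sum_congr rfl this, Finset.sum_ite_eq' Tᶜ (c j),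
        if_pos (Finset.mem_compl.mpr (hcT j))]
    rw [h1, h2, h3]
    simp
  -- pointwise facts about the rows on V
  have hrind : ∀ q ∈ V, LinearIndependent ℝ (fun k => ω (σ k) q) := by
    intro q hq
    rw [Fintype.linearIndependent_iff]
    intro g hg k
    have hvm : Matrix.vecMul g (B q) = 0 := by
      funext k'
      have := congrFun hg (τ k')
      simpa [hB, hA, Matrix.vecMul, dotProduct, Finset.sum_apply] using this
    have := Matrix.vecMul_injective_iff_isUnit.mpr (hVunit q hq)
      (by rw [hvm, Matrix.zero_vecMul] : Matrix.vecMul g (B q) = Matrix.vecMul 0 (B q))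
    exact congrFun this k
  have hrspan : ∀ q ∈ V, Submodule.span ℝ (Set.range fun k => ω (σ k) q) = D q := by
    intro q hq
    have hle : Submodule.span ℝ (Set.range fun k => ω (σ k) q) ≤ D q := by
      rw [Submodule.span_le]
      rintro _ ⟨k, rfl⟩
      rw [hωspan q (hVU hq)]
      exact Submodule.subset_span ⟨σ k, rfl⟩
    apply Submodule.eq_of_le_of_finrank_le hle
    rw [hωrank q (hVU hq), finrank_span_eq_card (hrind q hq), Fintype.card_fin]
  have hkerr : ∀ q ∈ V, ∀ w : Fin n → ℝ,
      (∀ α ∈ D q, α ⬝ᵥ w = 0) ↔ ∀ k, ω (σ k) q ⬝ᵥ w = 0 := by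
    intro q hq w
    constructor
    · intro h k
      apply h
      rw [hωspan q (hVU hq)]
      exact Submodule.subset_span ⟨σ k, rfl⟩
    · intro h α hα
      rw [← hrspan q hq] at hα
      induction hα using Submodule.span_induction with
      | mem α hα => obtain ⟨k, rfl⟩ := hα; exact h k
      | zero => simp
      | add α β _ _ hα hβ => rw [add_dotProduct, hα, hβ, add_zero]
      | smul a α _ hα => rw [smul_dotProduct, hα, smul_zero]
  refine ⟨v, ?_, ?_, ?_⟩
  · -- continuity
    intro j
    rw [continuousOn_pi]
    intro i
    by_cases hi : ∃ k, τ k = i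
    · obtain ⟨k, rfl⟩ := hi
      have heq : (fun q => v j q (τ k)) = fun q => -∑ k', (B q)⁻¹ k k' * ω (σ k') q (c j) := by
        funext q
        rw [hvτ, hx]
        simp [Matrix.mulVec, dotProduct]
      rw [heq]
      have hBinv : ∀ a b : Fin ρ, ContinuousOn (fun q => (B q)⁻¹ a b) V := by
        intro a b
        rw [continuousOn_iff_continuous_restrict]
        have hBc : Continuous fun qv : V => B qv := by
          apply continuous_matrix
          intro k k'
          exact continuousOn_iff_continuous_restrict.mp ((hωcomp (σ k) (τ k')).mono hVU)
        have h4 : (fun qv : V => (B qv)⁻¹) = fun qv : V => ((B qv).det)⁻¹ • (B qv).adjugate := by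
          funext qv
          rw [Matrix.inv_def, Ring.inverse_eq_inv]
        have h5 : Continuous fun qv : V => (B qv)⁻¹ := by
          rw [h4]
          exact (hBc.matrix_det.inv₀ fun qv => hVdet qv qv.2).smul hBc.matrix_adjugate
        exact ((continuous_apply b).comp ((continuous_apply a).comp h5))
      apply ContinuousOn.neg
      apply continuousOn_finset_sum
      intro k' _
      exact (hBinv k k').mul ((hωcomp (σ k') (c j)).mono hVU)
    · have heq : (fun q => v j q i) = fun _ => if i = c j then 1 else 0 :=
        funext fun q => hvnτ j q i hi
      rw [heq]
      exact continuousOn_const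
  · -- span equals annihilator
    intro q hq
    ext w
    simp only [SetLike.mem_coe, Set.mem_setOf_eq]
    constructor
    · intro hw
      rw [hkerr q hq w]
      induction hw using Submodule.span_induction with
      | mem w hw => obtain ⟨j, rfl⟩ := hw; exact fun k => hdotv q hq k j
      | zero => intro k; simp
      | add a b _ _ ha hb => intro k; rw [dotProduct_add, ha k, hb k, add_zero]
      | smul a w _ hw => intro k; rw [dotProduct_smul, hw k, smul_zero]
    · intro hw
      rw [hkerr q hq w] at hw
      set w' : Fin n → ℝ := w - ∑ j, w (c j) • v j q with hw'
      have hw'c : ∀ j₀, w' (c j₀) = 0 := by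
        intro j₀
        rw [hw']
        simp only [Pi.sub_apply, Finset.sum_apply, Pi.smul_apply, smul_eq_mul]
        rw [Finset.sum_congr rfl (fun j _ => by rw [hvc j q j₀])]
        simp
      have hw'Tc : ∀ i, i ∉ T → w' i = 0 := by
        intro i hi
        obtain ⟨j₀, rfl⟩ := hcsurj i hi
        exact hw'c j₀
      have hw'ker : ∀ k, ω (σ k) q ⬝ᵥ w' = 0 := by
        intro k
        rw [hw']
        rw [dotProduct_sub, hw k]
        have hsum : ω (σ k) q ⬝ᵥ (∑ j, w (c j) • v j q)
            = ∑ j, w (c j) * (ω (σ k) q ⬝ᵥ v j q) := by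
          simp only [dotProduct, Finset.sum_apply, Pi.smul_apply, smul_eq_mul,
            Finset.mul_sum]
          rw [Finset.sum_comm]
          exact Finset.sum_congr rfl fun j _ => Finset.sum_congr rfl fun i _ => by ring
        rw [hsum, Finset.sum_congr rfl (fun j _ => by rw [hdotv q hq k j, mul_zero])]
        simp
      have hy : (fun k' => w' (τ k')) = 0 := by
        have hBy : B q *ᵥ (fun k' => w' (τ k')) = 0 := by
          funext k
          have hthis := hw'ker k
          rw [hsplit q k w'] at hthis
          have h6 : (∑ i ∈ Tᶜ, ω (σ k) q i * w' i) = 0 :=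
            Finset.sum_eq_zero fun i hi => by
              rw [hw'Tc i (Finset.mem_compl.mp hi), mul_zero]
          rw [h6, add_zero] at hthis
          simpa [Matrix.mulVec, dotProduct] using hthis
        have := Matrix.mulVec_injective_iff_isUnit.mpr (hVunit q hq)
          (by rw [hBy, Matrix.mulVec_zero] : B q *ᵥ (fun k' => w' (τ k')) = B q *ᵥ 0)
        exact this
      have hw'0 : w' = 0 := by
        funext i
        by_cases hi : i ∈ T
        · obtain ⟨k, rfl⟩ := (hmemT i).mp hi
          exact congrFun hy k
        · exact hw'Tc i hi
      rw [hw'] at hw'0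
      rw [sub_eq_zero.mp hw'0]
      exact Submodule.sum_mem _ fun j _ =>
        Submodule.smul_mem _ _ (Submodule.subset_span ⟨j, rfl⟩)
  · -- pointwise linear independence
    intro q hq
    rw [Fintype.linearIndependent_iff]
    intro g hg j₀
    have := congrFun hg (c j₀)
    simp only [Finset.sum_apply, Pi.smul_apply, smul_eq_mul, Pi.zero_apply] at this
    rw [Finset.sum_congr rfl (fun j _ => by rw [hvc j q j₀])] at this
    simpa using this
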